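/- Cup-Cap theorem for pseudoconvex sets: every pseudohalfplane hypergraph on a vertex set of size at least binomial(k+l-4, k-2) + 1 contains a k-cup or an l-cap. -/

import Mathlib

/-- A set `G` skips a vertex `a` if `min G < a < max G` and `a ∉ G`. -/
def Skips {α : Type*} [LinearOrder α] (G : Set α) (a : α) : Prop :=
  a ∉ G ∧ (∃ x ∈ G, x < a) ∧ (∃ z ∈ G, a < z)

/-- A hypergraph (family of sets) on a linearly ordered vertex set is ABA-free if
there are no hyperedges `A, B` and vertices `x < y < z` with `x, z ∈ A \ B` and `y ∈ B \ A`. -/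
def ABAFree {α : Type*} [LinearOrder α] (F : Set (Set α)) : Prop :=
  ¬ ∃ A ∈ F, ∃ B ∈ F, ∃ x y z : α, x < y ∧ y < z ∧
      x ∈ A ∧ x ∉ B ∧ z ∈ A ∧ z ∉ B ∧ y ∈ B ∧ y ∉ A

/-- A vertex is unskippable with respect to a family if no member of the family skips it. -/
def Unskippable {α : Type*} [LinearOrder α] (F : Set (Set α)) (a : α) : Prop :=
  ∀ G ∈ F, ¬ Skips G a


/-- `A` is a cup: every vertex of `A` is a bottomvertex of the induced subhypergraph,
i.e. no induced bottomset `A \ G` (for `G ∈ F`) skips any vertex of `A`. -/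
def IsCup {α : Type*} [LinearOrder α] (F : Set (Set α)) (A : Set α) : Prop :=
  ∀ a ∈ A, ∀ G ∈ F, ¬ Skips (A \ G) a

/-- `A` is a cap: every vertex of `A` is a topvertex of the induced subhypergraph,
i.e. no induced topset `A ∩ G` (for `G ∈ F`) skips any vertex of `A`. -/
def IsCap {α : Type*} [LinearOrder α] (F : Set (Set α)) (A : Set α) : Prop :=
  ∀ a ∈ A, ∀ G ∈ F, ¬ Skips (A ∩ G) a

/-- Any set with at most two elements is a cup. -/
lemma card_le_two_isCup {α : Type*} [LinearOrder α] (F : Set (Set α)) (A : Finset α)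
    (h : A.card ≤ 2) : IsCup F ↑A := by
  rintro a ha G _ ⟨haG, ⟨x, hx, hxa⟩, ⟨z, hz, haz⟩⟩
  have hxA : x ∈ A := by simpa using hx.1
  have hzA : z ∈ A := by simpa using hz.1
  have haA : a ∈ A := by simpa using ha
  have hsub : ({x, a, z} : Finset α) ⊆ A := by
    intro t ht
    simp only [Finset.mem_insert, Finset.mem_singleton] at ht
    rcases ht with rfl | rfl | rfl <;> assumption
  have h3 : ({x, a, z} : Finset α).card = 3 := by
    rw [Finset.card_insert_of_notMem (by simp [hxa.ne, (hxa.trans haz).ne]),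
        Finset.card_insert_of_notMem (by simp [haz.ne]), Finset.card_singleton]
  have := Finset.card_le_card hsub
  omega

/-- Any set with at most two elements is a cap. -/
lemma card_le_two_isCap {α : Type*} [LinearOrder α] (F : Set (Set α)) (A : Finset α)
    (h : A.card ≤ 2) : IsCap F ↑A := by
  rintro a ha G _ ⟨haG, ⟨x, hx, hxa⟩, ⟨z, hz, haz⟩⟩
  have hxA : x ∈ A := by simpa using hx.1
  have hzA : z ∈ A := by simpa using hz.1
  have haA : a ∈ A := by simpa using ha
  have hsub : ({x, a, z} : Finset α) ⊆ A := by
    intro t ht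
    simp only [Finset.mem_insert, Finset.mem_singleton] at ht
    rcases ht with rfl | rfl | rfl <;> assumption
  have h3 : ({x, a, z} : Finset α).card = 3 := by
    rw [Finset.card_insert_of_notMem (by simp [hxa.ne, (hxa.trans haz).ne]),
        Finset.card_insert_of_notMem (by simp [haz.ne]), Finset.card_singleton]
  have := Finset.card_le_card hsub
  omega

/-- Key extension lemma: if `C` is a cup ending at `p` and `D` is a cap starting at `p`,
with `d2` the successor of `p` in `D`, then either `C ∪ {d2}` is a cup or `D ∪ {c}`
is a cap for some `c ∈ C` with `c < p`. -/
lemma key_ext {α : Type*} [LinearOrder α] {F : Set (Set α)} (hABA : ABAFree F)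
    (C D : Finset α) (p : α)
    (hCcup : IsCup F ↑C) (hDcap : IsCap F ↑D)
    (hpC : p ∈ C) (hCle : ∀ c ∈ C, c ≤ p)
    (hpD : p ∈ D) (hDle : ∀ d ∈ D, p ≤ d)
    (d2 : α) (hd2D : d2 ∈ D) (hpd2 : p < d2)
    (hd2min : ∀ d ∈ D, p < d → d2 ≤ d) :
    IsCup F ↑(C ∪ {d2}) ∨ ∃ c ∈ C, c < p ∧ IsCap F ↑(D ∪ {c}) := by
  classical
  by_cases hcup : IsCup F ↑(C ∪ {d2})
  · exact Or.inl hcup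
  right
  simp only [IsCup] at hcup
  push_neg at hcup
  obtain ⟨a, haA, G, hGF, hskip⟩ := hcup
  obtain ⟨haG', ⟨x, hx, hxa⟩, ⟨z, hz, haz⟩⟩ := hskip
  have hmem : ∀ {t : α}, t ∈ (↑(C ∪ {d2}) : Set α) → t ∈ C ∨ t = d2 := by
    intro t ht
    have := (by simpa using ht : t = d2 ∨ t ∈ C)
    tauto
  -- a ∈ C
  have haC : a ∈ C := by
    rcases hmem haA with h | rfl
    · exact h
    · exfalso
      rcases hmem hz.1 with h | rfl
      · exact absurd (lt_of_le_of_lt (hCle z h) hpd2) (not_lt.mpr haz.le)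
      · exact lt_irrefl _ haz
  have haG : a ∈ G := by
    by_contra h
    exact haG' ⟨haA, h⟩
  have hap : a ≤ p := hCle a haC
  -- x ∈ C
  have hxC : x ∈ C := by
    rcases hmem hx.1 with h | rfl
    · exact h
    · exact absurd (hxa.trans (lt_of_le_of_lt hap hpd2)) (lt_irrefl _)
  -- z = d2 and d2 ∉ G
  have hzd2 : z = d2 := by
    rcases hmem hz.1 with h | rfl
    · exfalso
      exact hCcup a (by simpa using haC) G hGF
        ⟨fun hh => hh.2 haG, ⟨x, ⟨by simpa using hxC, hx.2⟩, hxa⟩,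
         ⟨z, ⟨by simpa using h, hz.2⟩, haz⟩⟩
    · rfl
  have hd2G : d2 ∉ G := hzd2 ▸ hz.2
  -- c := max element of C \ G
  set CG := C.filter (fun c => c ∉ G) with hCGdef
  have hxCG : x ∈ CG := Finset.mem_filter.mpr ⟨hxC, hx.2⟩
  have hne : CG.Nonempty := ⟨x, hxCG⟩
  set c := CG.max' hne with hcdef
  have hcC : c ∈ C := (Finset.mem_filter.mp (CG.max'_mem hne)).1
  have hcG : c ∉ G := (Finset.mem_filter.mp (CG.max'_mem hne)).2
  have hca : c < a := by
    by_contra h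
    push_neg at h
    have hac : a < c := lt_of_le_of_ne h (fun h' => hcG (h' ▸ haG))
    exact hCcup a (by simpa using haC) G hGF
      ⟨fun hh => hh.2 haG, ⟨x, ⟨by simpa using hxC, hx.2⟩, hxa⟩,
       ⟨c, ⟨by simpa using hcC, hcG⟩, hac⟩⟩
  have hcp : c < p := lt_of_lt_of_le hca hap
  have hgtG : ∀ c' ∈ C, c < c' → c' ∈ G := by
    intro c' h1 h2
    by_contra h3
    exact absurd (CG.le_max' c' (Finset.mem_filter.mpr ⟨h1, h3⟩)) (not_le.mpr h2)
  have hpG : p ∈ G := hgtG p hpC hcp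
  have hDG : ∀ d ∈ D, p < d → d ∉ G := by
    intro d hdD hpd hdG
    rcases lt_trichotomy d d2 with h | rfl | h
    · exact absurd (hd2min d hdD hpd) (not_le.mpr h)
    · exact hd2G hdG
    · exact hDcap d2 (by simpa using hd2D) G hGF
        ⟨fun hh => hd2G hh.2, ⟨p, ⟨by simpa using hpD, hpG⟩, hpd2⟩,
         ⟨d, ⟨by simpa using hdD, hdG⟩, h⟩⟩
  refine ⟨c, hcC, hcp, ?_⟩
  rintro b hb H hHF ⟨hbS, ⟨x', hx', hx'b⟩, ⟨z', hz', hbz'⟩⟩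
  have hmem2 : ∀ {t : α}, t ∈ (↑(D ∪ {c}) : Set α) → t ∈ D ∨ t = c := by
    intro t ht
    have := (by simpa using ht : t = c ∨ t ∈ D)
    tauto
  -- b ∈ D
  have hbD : b ∈ D := by
    rcases hmem2 hb with h | rfl
    · exact h
    · exfalso
      rcases hmem2 hx'.1 with h | rfl
      · exact absurd (lt_of_lt_of_le hcp (hDle x' h)) (not_lt.mpr hx'b.le)
      · exact lt_irrefl _ hx'b
  have hbH : b ∉ H := fun h => hbS ⟨hb, h⟩
  have hpb : p ≤ b := hDle b hbD
  -- z' ∈ D ∩ H, z' > p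
  have hz'D : z' ∈ D := by
    rcases hmem2 hz'.1 with h | rfl
    · exact h
    · exact absurd (hcp.trans (lt_of_le_of_lt hpb hbz')) (lt_irrefl _)
  have hz'H : z' ∈ H := hz'.2
  have hpz' : p < z' := lt_of_le_of_lt hpb hbz'
  have hz'G : z' ∉ G := hDG z' hz'D hpz'
  -- x' = c, so c ∈ H
  have hx'c : x' = c := by
    rcases hmem2 hx'.1 with h | rfl
    · exfalso
      exact hDcap b (by simpa using hbD) H hHF
        ⟨fun hh => hbH hh.2, ⟨x', ⟨by simpa using h, hx'.2⟩, hx'b⟩,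
         ⟨z', ⟨by simpa using hz'D, hz'H⟩, hbz'⟩⟩
    · rfl
  have hcH : c ∈ H := hx'c ▸ hx'.2
  -- p ∉ H
  have hpH : p ∉ H := by
    intro hpH
    have hpltb : p < b := lt_of_le_of_ne hpb (fun h => hbH (h ▸ hpH))
    exact hDcap b (by simpa using hbD) H hHF
      ⟨fun hh => hbH hh.2, ⟨p, ⟨by simpa using hpD, hpH⟩, hpltb⟩,
       ⟨z', ⟨by simpa using hz'D, hz'H⟩, hbz'⟩⟩
  exact hABA ⟨H, hHF, G, hGF, c, p, z', hcp, hpz', hcH, hcG, hz'H, hz'G, hpG, hpH⟩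

/-- The main induction: any `s` with at least `(k+l-4 choose k-2) + 1` elements contains
a `k`-cup or an `l`-cap. -/
lemma cup_cap_main {α : Type*} [LinearOrder α] (F : Set (Set α)) (hABA : ABAFree F) :
    ∀ N k l : ℕ, k + l ≤ N → 2 ≤ k → 2 ≤ l → ∀ s : Finset α,
      Nat.choose (k + l - 4) (k - 2) + 1 ≤ s.card →
      (∃ A : Finset α, A ⊆ s ∧ A.card = k ∧ IsCup F ↑A) ∨
      (∃ B : Finset α, B ⊆ s ∧ B.card = l ∧ IsCap F ↑B) := by
  intro N
  induction N with
  | zero => intro k l h hk hl; omega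
  | succ N ih =>
    intro k l hN hk hl s hcard
    classical
    by_cases hk2 : k = 2
    · subst hk2
      left
      have h2 : 2 ≤ s.card := by simpa using hcard
      obtain ⟨A, hAs, hA2⟩ := Finset.exists_subset_card_eq h2
      exact ⟨A, hAs, hA2, card_le_two_isCup F A hA2.le⟩
    by_cases hl2 : l = 2
    · subst hl2
      right
      have he : k + 2 - 4 = k - 2 := by omega
      rw [he, Nat.choose_self] at hcard
      obtain ⟨B, hBs, hB2⟩ := Finset.exists_subset_card_eq hcard
      exact ⟨B, hBs, hB2, card_le_two_isCap F B hB2.le⟩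
    have hk3 : 3 ≤ k := by omega
    have hl3 : 3 ≤ l := by omega
    set P : α → Prop := fun p =>
      ∃ A : Finset α, A ⊆ s ∧ A.card = k - 1 ∧ IsCup F ↑A ∧ p ∈ A ∧ ∀ a ∈ A, a ≤ p with hPdef
    set T := s.filter P with hTdef
    set U := s.filter (fun p => ¬ P p) with hUdef
    have hsplit : T.card + U.card = s.card :=
      Finset.card_filter_add_card_filter_not (p := P)
    have pascal : Nat.choose (k + l - 4) (k - 2)
        = Nat.choose (k + l - 5) (k - 3) + Nat.choose (k + l - 5) (k - 2) := by
      have h1 : k + l - 4 = (k + l - 5) + 1 := by omega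
      have h2 : k - 2 = (k - 3) + 1 := by omega
      rw [h1, h2, Nat.choose_succ_succ]
    by_cases hUc : Nat.choose (k + l - 5) (k - 3) + 1 ≤ U.card
    · have hrec := ih (k - 1) l (by omega) (by omega) hl U (by
        have e1 : k - 1 + l - 4 = k + l - 5 := by omega
        have e2 : k - 1 - 2 = k - 3 := by omega
        rw [e1, e2]; exact hUc)
      rcases hrec with ⟨A, hAU, hAcard, hAcup⟩ | ⟨B, hBU, hBcard, hBcap⟩
      · exfalso
        have hAne : A.Nonempty := Finset.card_pos.mp (by omega)
        have hmax := A.max'_mem hAne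
        have hPp : P (A.max' hAne) :=
          ⟨A, hAU.trans (Finset.filter_subset _ s), hAcard, hAcup, hmax,
           fun a ha => A.le_max' a ha⟩
        have hmem := hAU hmax
        rw [hUdef, Finset.mem_filter] at hmem
        exact hmem.2 hPp
      · exact Or.inr ⟨B, hBU.trans (Finset.filter_subset _ s), hBcard, hBcap⟩
    · have hTc : Nat.choose (k + l - 5) (k - 2) + 1 ≤ T.card := by omega
      have hrec := ih k (l - 1) (by omega) hk (by omega) T (by
        have e1 : k + (l - 1) - 4 = k + l - 5 := by omega
        rw [e1]; exact hTc)
      rcases hrec with ⟨A, hAT, hAcard, hAcup⟩ | ⟨D, hDT, hDcard, hDcap⟩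
      · exact Or.inl ⟨A, hAT.trans (Finset.filter_subset _ s), hAcard, hAcup⟩
      · have hDne : D.Nonempty := Finset.card_pos.mp (by omega)
        set p := D.min' hDne with hpdef
        have hpD : p ∈ D := D.min'_mem hDne
        have hPp : P p := by
          have hmem := hDT hpD
          rw [hTdef, Finset.mem_filter] at hmem
          exact hmem.2
        obtain ⟨C, hCs, hCcard, hCcup, hpC, hCle⟩ := hPp
        have hDle : ∀ d ∈ D, p ≤ d := fun d hd => D.min'_le d hd
        have hDerase : (D.erase p).Nonempty := by
          rw [← Finset.card_pos, Finset.card_erase_of_mem hpD]; omega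
        set d2 := (D.erase p).min' hDerase with hd2def
        have hd2mem := (D.erase p).min'_mem hDerase
        have hd2D : d2 ∈ D := Finset.mem_of_mem_erase hd2mem
        have hd2ne : d2 ≠ p := Finset.ne_of_mem_erase hd2mem
        have hpd2 : p < d2 := lt_of_le_of_ne (D.min'_le d2 hd2D) (Ne.symm hd2ne)
        have hd2min : ∀ d ∈ D, p < d → d2 ≤ d := fun d hd hpd =>
          (D.erase p).min'_le d (Finset.mem_erase.mpr ⟨ne_of_gt hpd, hd⟩)
        rcases key_ext hABA C D p hCcup hDcap hpC hCle hpD hDle d2 hd2D hpd2 hd2min with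
          hcup | ⟨c, hcC, hcp, hcap⟩
        · left
          refine ⟨C ∪ {d2}, ?_, ?_, hcup⟩
          · intro t ht
            rcases Finset.mem_union.mp ht with h | h
            · exact hCs h
            · rw [Finset.mem_singleton] at h
              exact (Finset.filter_subset _ s) (hDT (h ▸ hd2D))
          · have hd2C : d2 ∉ C := fun h => absurd (hCle d2 h) (not_le.mpr hpd2)
            rw [Finset.union_comm, ← Finset.insert_eq,
                Finset.card_insert_of_notMem hd2C, hCcard]
            omega
        · right
          refine ⟨D ∪ {c}, ?_, ?_, hcap⟩
          · intro t ht
            rcases Finset.mem_union.mp ht with h | h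
            · exact (Finset.filter_subset _ s) (hDT h)
            · rw [Finset.mem_singleton] at h
              exact hCs (h ▸ hcC)
          · have hcD : c ∉ D := fun h => absurd (hDle c h) (not_le.mpr hcp)
            rw [Finset.union_comm, ← Finset.insert_eq,
                Finset.card_insert_of_notMem hcD, hDcard]
            omega

/-- Cup-Cap theorem for pseudoconvex sets: a pseudohalfplane hypergraph on at least
`(k+l-4 choose k-2) + 1` vertices contains a `k`-cup or an `l`-cap. -/
theorem cup_cap_theorem {α : Type*} [LinearOrder α] [Fintype α]
    (k l : ℕ) (hk : 2 ≤ k) (hl : 2 ≤ l)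
    (F : Set (Set α)) (hABA : ABAFree F)
    (hcard : Nat.choose (k + l - 4) (k - 2) + 1 ≤ Fintype.card α) :
    (∃ A : Finset α, A.card = k ∧ IsCup F ↑A) ∨
    (∃ B : Finset α, B.card = l ∧ IsCap F ↑B) := by
  rcases cup_cap_main F hABA (k + l) k l le_rfl hk hl Finset.univ
      (by simpa [Finset.card_univ] using hcard) with
    ⟨A, _, h1, h2⟩ | ⟨B, _, h1, h2⟩
  · exact Or.inl ⟨A, h1, h2⟩
  · exact Or.inr ⟨B, h1, h2⟩
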